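/- Let f be a monic polynomial of degree n over a commutative ring A in which 2 is a regular element (neither zero nor a zero divisor). Then A is the ring of invariants of the splitting algebra A_f under the action of the symmetric group S_n. -/

import Mathlib

open MvPolynomial Polynomial

/-- The ideal `(s₁ - f₁, ..., sₙ - fₙ)` defining the splitting algebra, where
`fᵢ = (-1)^i · coeff f (n - i)` are the signed coefficients of `f`. -/
noncomputable def splittingIdeal (A : Type*) [CommRing A] (f : Polynomial A) (n : ℕ) :
    Ideal (MvPolynomial (Fin n) A) :=
  Ideal.span (Set.range fun i : Fin n =>
    esymm (Fin n) A ((i : ℕ) + 1) -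
      MvPolynomial.C ((-1 : A) ^ ((i : ℕ) + 1) * f.coeff (n - ((i : ℕ) + 1))))

/-- The splitting algebra `A_f = A[t₁,...,tₙ]/(s₁ - f₁, ..., sₙ - fₙ)`. -/
noncomputable def SplittingAlgebra (A : Type*) [CommRing A] (f : Polynomial A) (n : ℕ) :=
  MvPolynomial (Fin n) A ⧸ splittingIdeal A f n

noncomputable instance (A : Type*) [CommRing A] (f : Polynomial A) (n : ℕ) :
    CommRing (SplittingAlgebra A f n) := Ideal.Quotient.commRing _

noncomputable instance (R A : Type*) [CommSemiring R] [CommRing A] [Algebra R A]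
    (f : Polynomial A) (n : ℕ) : Algebra R (SplittingAlgebra A f n) :=
  Ideal.Quotient.algebra R

/-- The universal roots `τᵢ` of `f` in the splitting algebra. -/
noncomputable def univRoot (A : Type*) [CommRing A] (f : Polynomial A) (n : ℕ) (i : Fin n) :
    SplittingAlgebra A f n :=
  Ideal.Quotient.mk (splittingIdeal A f n) (MvPolynomial.X i)

/-- The action of a permutation `σ` on the splitting algebra, sending `τᵢ` to `τ_{σ⁻¹ i}`. -/
noncomputable def permHom (A : Type*) [CommRing A] (f : Polynomial A) (n : ℕ)
    (σ : Equiv.Perm (Fin n)) : SplittingAlgebra A f n →ₐ[A] SplittingAlgebra A f n :=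
  Ideal.Quotient.liftₐ (splittingIdeal A f n)
    ((Ideal.Quotient.mkₐ A (splittingIdeal A f n)).comp
      (rename (σ.symm : Fin n → Fin n)))
    (by
      intro a ha
      have h : splittingIdeal A f n ≤ RingHom.ker
          ((Ideal.Quotient.mkₐ A (splittingIdeal A f n)).comp
            (rename (σ.symm : Fin n → Fin n))) := by
        rw [splittingIdeal, Ideal.span_le]
        rintro _ ⟨i, rfl⟩
        have : (rename (σ.symm : Fin n → Fin n))
            (esymm (Fin n) A ((i : ℕ) + 1) -
              MvPolynomial.C ((-1 : A) ^ ((i : ℕ) + 1) * f.coeff (n - ((i : ℕ) + 1)))) =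
            esymm (Fin n) A ((i : ℕ) + 1) -
              MvPolynomial.C ((-1 : A) ^ ((i : ℕ) + 1) * f.coeff (n - ((i : ℕ) + 1))) := by
          rw [map_sub, rename_esymm, rename_C]
        simp only [SetLike.mem_coe, RingHom.mem_ker, AlgHom.coe_comp, Function.comp_apply, this]
        rw [Ideal.Quotient.mkₐ_eq_mk, Ideal.Quotient.eq_zero_iff_mem]
        exact Ideal.subset_span ⟨i, rfl⟩
      exact h ha)


namespace SplitAux


variable {A : Type*} [CommRing A] (f : Polynomial A) (n : ℕ)

lemma algebraMap_eq_mk_C (a : A) :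
    algebraMap A (SplittingAlgebra A f n) a
      = Ideal.Quotient.mk (splittingIdeal A f n) (MvPolynomial.C a) := rfl

lemma mk_esymm (i : Fin n) :
    Ideal.Quotient.mk (splittingIdeal A f n) (esymm (Fin n) A ((i : ℕ) + 1))
      = algebraMap A (SplittingAlgebra A f n)
          ((-1 : A) ^ ((i : ℕ) + 1) * f.coeff (n - ((i : ℕ) + 1))) := by
  rw [algebraMap_eq_mk_C]
  rw [Ideal.Quotient.mk_eq_mk_iff_sub_mem]
  exact Ideal.subset_span ⟨i, rfl⟩

/-- evaluation of the `k`-th elementary symmetric polynomial -/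
lemma aeval_esymm {C : Type*} [CommRing C] [Algebra A C] (u : Fin n → C) (k : ℕ) (hk : k ≤ n) :
    (MvPolynomial.aeval u) (esymm (Fin n) A k)
      = (∏ i, (Polynomial.X - Polynomial.C (u i))).coeff (n - k) * (-1 : C) ^ k := by
  have hcard : Multiset.card (Finset.univ.val.map u) = n := by simp
  have h1 : (∏ i, (Polynomial.X - Polynomial.C (u i)))
      = ((Finset.univ.val.map u).map (fun t => Polynomial.X - Polynomial.C t)).prod := by
    rw [Finset.prod_eq_multiset_prod, Multiset.map_map]; rfl
  rw [h1, Multiset.prod_X_sub_C_coeff _ (by omega : n - k ≤ Multiset.card (Finset.univ.val.map u)),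
    hcard, aeval_esymm_eq_multiset_esymm]
  have h2 : n - (n - k) = k := by omega
  rw [h2, mul_comm, ← mul_assoc, ← pow_add, Even.neg_one_pow ⟨k, rfl⟩, one_mul]

lemma aeval_univRoot (p : MvPolynomial (Fin n) A) :
    MvPolynomial.aeval (univRoot A f n) p = Ideal.Quotient.mk (splittingIdeal A f n) p := by
  have h : (MvPolynomial.aeval (univRoot A f n) : MvPolynomial (Fin n) A →ₐ[A] _)
      = Ideal.Quotient.mkₐ A (splittingIdeal A f n) :=
    MvPolynomial.algHom_ext fun i => by rw [MvPolynomial.aeval_X]; rfl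
  rw [h]; rfl

lemma prod_univRoot (hm : f.Monic) (hdeg : f.natDegree = n) :
    ∏ i, (Polynomial.X - Polynomial.C (univRoot A f n i))
      = f.map (algebraMap A (SplittingAlgebra A f n)) := by
  ext j
  rcases le_or_gt j n with hj | hj
  · have h1 := aeval_esymm (A := A) n (univRoot A f n) (n - j) (by omega)
    rw [aeval_univRoot, (by omega : n - (n - j) = j)] at h1
    have h2 : HMul.hMul (α := SplittingAlgebra A f n) (β := SplittingAlgebra A f n)
        (Ideal.Quotient.mk (splittingIdeal A f n) (esymm (Fin n) A (n - j))) ((-1) ^ (n - j))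
        = (∏ i, (Polynomial.X - Polynomial.C (univRoot A f n i))).coeff j := by
      rw [h1, mul_assoc, ← mul_pow]
      norm_num
    rw [← h2, Polynomial.coeff_map]
    rcases Nat.eq_zero_or_pos (n - j) with hk0 | hkpos
    · have hjn : j = n := by omega
      rw [hk0, esymm_zero, pow_zero, map_one, hjn, ← hdeg, hm.coeff_natDegree, map_one]
      exact mul_one _
    · have hik : n - j - 1 < n := by omega
      have h3 := mk_esymm f n ⟨n - j - 1, hik⟩
      simp only [Fin.val_mk] at h3
      rw [(by omega : n - j - 1 + 1 = n - j), (by omega : n - (n - j) = j)] at h3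
      rw [h3, map_mul, map_pow, map_neg, map_one, mul_comm, ← mul_assoc, ← mul_pow]
      norm_num
  · nontriviality (SplittingAlgebra A f n)
    have hmon : (∏ i, (Polynomial.X - Polynomial.C (univRoot A f n i))).natDegree = n := by
      rw [Polynomial.natDegree_prod_of_monic _ _ (fun i _ => Polynomial.monic_X_sub_C _)]
      simp [Polynomial.natDegree_X_sub_C]
    rw [Polynomial.coeff_eq_zero_of_natDegree_lt (by rw [hmon]; exact hj),
      Polynomial.coeff_map, Polynomial.coeff_eq_zero_of_natDegree_lt (by rw [hdeg]; exact hj),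
      map_zero]

noncomputable def liftSplitting {C : Type*} [CommRing C] [Algebra A C] (u : Fin n → C)
    (h : ∏ i, (Polynomial.X - Polynomial.C (u i)) = f.map (algebraMap A C)) :
    SplittingAlgebra A f n →ₐ[A] C :=
  Ideal.Quotient.liftₐ (splittingIdeal A f n) (MvPolynomial.aeval u) (by
    intro a ha
    have hle : splittingIdeal A f n ≤ RingHom.ker (MvPolynomial.aeval u : _ →ₐ[A] C) := by
      rw [splittingIdeal, Ideal.span_le]
      rintro _ ⟨i, rfl⟩
      have hkn : (i : ℕ) + 1 ≤ n := i.2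
      have h1 := aeval_esymm (A := A) n u ((i : ℕ) + 1) hkn
      rw [h] at h1
      have h2 : (MvPolynomial.aeval u) (MvPolynomial.C
            ((-1:A) ^ ((i:ℕ)+1) * f.coeff (n - ((i:ℕ)+1))))
          = algebraMap A C ((-1) ^ ((i:ℕ)+1) * f.coeff (n - ((i:ℕ)+1))) :=
        MvPolynomial.aeval_C _ _
      simp only [SetLike.mem_coe, RingHom.mem_ker, map_sub]
      rw [h1, h2, Polynomial.coeff_map, map_mul, map_pow, map_neg, map_one]
      ring
    exact hle ha)

@[simp] lemma liftSplitting_univRoot {C : Type*} [CommRing C] [Algebra A C] (u : Fin n → C)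
    (h : ∏ i, (Polynomial.X - Polynomial.C (u i)) = f.map (algebraMap A C)) (i : Fin n) :
    liftSplitting f n u h (univRoot A f n i) = u i := by
  show Ideal.Quotient.liftₐ (splittingIdeal A f n) (MvPolynomial.aeval u) _
      (Ideal.Quotient.mk (splittingIdeal A f n) (MvPolynomial.X i)) = u i
  show MvPolynomial.aeval u (MvPolynomial.X i) = u i
  simp

lemma algHom_ext' {C : Type*} [CommRing C] [Algebra A C]
    {φ ψ : SplittingAlgebra A f n →ₐ[A] C}
    (h : ∀ i, φ (univRoot A f n i) = ψ (univRoot A f n i)) : φ = ψ := by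
  have hc : φ.comp (Ideal.Quotient.mkₐ A (splittingIdeal A f n))
      = ψ.comp (Ideal.Quotient.mkₐ A (splittingIdeal A f n)) :=
    MvPolynomial.algHom_ext fun i => h i
  ext x
  obtain ⟨p, rfl⟩ := Ideal.Quotient.mkₐ_surjective A (splittingIdeal A f n) x
  exact DFunLike.congr_fun hc p

lemma level0_mem (x : SplittingAlgebra A f 0) :
    x ∈ (algebraMap A (SplittingAlgebra A f 0)).range := by
  obtain ⟨p, rfl⟩ := Ideal.Quotient.mk_surjective x
  obtain ⟨a, rfl⟩ := MvPolynomial.C_surjective (Fin 0) p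
  exact ⟨a, rfl⟩

lemma inj0 : Function.Injective (algebraMap A (SplittingAlgebra A f 0)) := by
  have hspan : splittingIdeal A f 0 = ⊥ := by
    rw [splittingIdeal]
    have : (Set.range fun i : Fin 0 =>
        esymm (Fin 0) A ((i : ℕ) + 1) -
          MvPolynomial.C ((-1 : A) ^ ((i : ℕ) + 1) * f.coeff (0 - ((i : ℕ) + 1)))) = ∅ :=
      Set.range_eq_empty _
    rw [this, Ideal.span_empty]
  intro a b hab
  rw [algebraMap_eq_mk_C, algebraMap_eq_mk_C] at hab
  change (Ideal.Quotient.mk (splittingIdeal A f 0) (MvPolynomial.C a) :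
    MvPolynomial (Fin 0) A ⧸ splittingIdeal A f 0) = Ideal.Quotient.mk _ (MvPolynomial.C b) at hab
  rw [Ideal.Quotient.mk_eq_mk_iff_sub_mem, hspan,
    Ideal.mem_bot, sub_eq_zero] at hab
  exact MvPolynomial.C_injective _ _ hab

section AdjoinRootAux

noncomputable def nextPoly : Polynomial (AdjoinRoot f) :=
  (f.map (algebraMap A (AdjoinRoot f))) /ₘ (Polynomial.X - Polynomial.C (AdjoinRoot.root f))

lemma nextPoly_spec :
    (Polynomial.X - Polynomial.C (AdjoinRoot.root f)) * nextPoly f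
      = f.map (algebraMap A (AdjoinRoot f)) := by
  have h := Polynomial.modByMonic_add_div (f.map (algebraMap A (AdjoinRoot f)))
    (Polynomial.X - Polynomial.C (AdjoinRoot.root f))
  rw [Polynomial.modByMonic_X_sub_C_eq_C_eval] at h
  have hev : (f.map (algebraMap A (AdjoinRoot f))).eval (AdjoinRoot.root f) = 0 := by
    rw [Polynomial.eval_map, AdjoinRoot.algebraMap_eq, AdjoinRoot.eval₂_root]
  rw [hev, map_zero, zero_add] at h
  exact h

lemma nextPoly_monic [Nontrivial A] (hm : f.Monic) : (nextPoly f).Monic :=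
  (Polynomial.monic_X_sub_C (AdjoinRoot.root f)).of_mul_monic_left
    (by rw [nextPoly_spec]; exact hm.map _)

lemma algebraMap_adjoinRoot_injective (hm : f.Monic) (hd : f.natDegree ≠ 0) :
    Function.Injective (algebraMap A (AdjoinRoot f)) := by
  intro a b hab
  have h : AdjoinRoot.mk f (Polynomial.C (a - b)) = 0 := by
    rw [map_sub, map_sub, AdjoinRoot.mk_C, AdjoinRoot.mk_C, ← AdjoinRoot.algebraMap_eq, hab,
      sub_self]
  rw [AdjoinRoot.mk_eq_zero] at h
  obtain ⟨q, hq⟩ := h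
  rcases eq_or_ne q 0 with rfl | hq0
  · rw [mul_zero, ← Polynomial.C_0] at hq
    exact sub_eq_zero.mp (Polynomial.C_injective hq)
  · exfalso
    have hdeg : (f * q).natDegree = f.natDegree + q.natDegree :=
      Polynomial.natDegree_mul' (by
        rw [hm.leadingCoeff, one_mul]
        exact Polynomial.leadingCoeff_ne_zero.mpr hq0)
    rw [← hq] at hdeg
    have : (Polynomial.C (a - b)).natDegree = 0 := Polynomial.natDegree_C _
    omega

lemma nontrivial_adjoinRoot [Nontrivial A] (hm : f.Monic) (hd : f.natDegree ≠ 0) :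
    Nontrivial (AdjoinRoot f) :=
  nontrivial_of_ne (algebraMap A (AdjoinRoot f) 0) (algebraMap A (AdjoinRoot f) 1)
    (fun h => zero_ne_one (algebraMap_adjoinRoot_injective f hm hd h))

lemma nextPoly_natDegree [Nontrivial A] (hm : f.Monic) {m : ℕ} (hdeg : f.natDegree = m + 1) :
    (nextPoly f).natDegree = m := by
  have : Nontrivial (AdjoinRoot f) := nontrivial_adjoinRoot f hm (by omega)
  have h1 : ((Polynomial.X - Polynomial.C (AdjoinRoot.root f)) * nextPoly f).natDegree
      = 1 + (nextPoly f).natDegree := by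
    rw [(Polynomial.monic_X_sub_C _).natDegree_mul (nextPoly_monic f hm),
      Polynomial.natDegree_X_sub_C]
  rw [nextPoly_spec, Polynomial.Monic.natDegree_map hm, hdeg] at h1
  omega

lemma coord_lemma (hm : f.Monic) (hdeg2 : 2 ≤ f.natDegree) {u v : A}
    (h : algebraMap A (AdjoinRoot f) u + v • AdjoinRoot.root f = 0) : v = 0 := by
  have hdim : (AdjoinRoot.powerBasis' hm).dim = f.natDegree := rfl
  have h0 : (0:ℕ) < (AdjoinRoot.powerBasis' hm).dim := by omega
  have h1 : (1:ℕ) < (AdjoinRoot.powerBasis' hm).dim := by omega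
  have e0 : algebraMap A (AdjoinRoot f) u = u • (AdjoinRoot.powerBasis' hm).basis ⟨0, h0⟩ := by
    rw [(AdjoinRoot.powerBasis' hm).basis_eq_pow ⟨0, h0⟩, Algebra.algebraMap_eq_smul_one]
    norm_num
  have e1 : v • AdjoinRoot.root f = v • (AdjoinRoot.powerBasis' hm).basis ⟨1, h1⟩ := by
    rw [(AdjoinRoot.powerBasis' hm).basis_eq_pow ⟨1, h1⟩]
    simp
  rw [e0, e1] at h
  have h3 := congrArg (AdjoinRoot.powerBasis' hm).basis.repr h
  rw [map_add, map_smul, map_smul, Module.Basis.repr_self, Module.Basis.repr_self, map_zero] at h3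
  have h4 := DFunLike.congr_fun h3 ⟨1, h1⟩
  rw [Finsupp.add_apply, Finsupp.smul_apply, Finsupp.smul_apply,
    Finsupp.single_eq_of_ne (by simp : (⟨1,h1⟩ : Fin _) ≠ ⟨0,h0⟩),
    Finsupp.single_eq_same, Finsupp.coe_zero, Pi.zero_apply, smul_zero, zero_add,
    smul_eq_mul, mul_one] at h4
  exact h4

lemma two_regular_adjoinRoot (hm : f.Monic) (h2 : (2:A) ∈ nonZeroDivisors A) :
    (2 : AdjoinRoot f) ∈ nonZeroDivisors (AdjoinRoot f) := by
  rw [mem_nonZeroDivisors_iff_right]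
  intro z hz
  have hz' : (2:A) • z = 0 := by
    rw [Algebra.smul_def, map_ofNat, mul_comm]
    exact hz
  have hrep : (AdjoinRoot.powerBasis' hm).basis.repr z = 0 := by
    ext i
    have h3 := congrArg (fun w => (AdjoinRoot.powerBasis' hm).basis.repr w i) hz'
    simp only [map_smul, map_zero, Finsupp.smul_apply, smul_eq_mul, Finsupp.coe_zero,
      Pi.zero_apply] at h3
    have := mem_nonZeroDivisors_iff_right.mp h2 ((AdjoinRoot.powerBasis' hm).basis.repr z i) (by rw [mul_comm]; exact h3)
    simpa using this
  have := congrArg (AdjoinRoot.powerBasis' hm).basis.repr.symm hrep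
  rw [LinearEquiv.symm_apply_apply, map_zero] at this
  exact this

lemma exists_rep [Nontrivial A] (hm : f.Monic) (hd : f.natDegree ≠ 0) (y : AdjoinRoot f) :
    ∃ P : Polynomial A, P.natDegree < f.natDegree ∧ AdjoinRoot.mk f P = y := by
  obtain ⟨Q, rfl⟩ := AdjoinRoot.mk_surjective y
  refine ⟨Q %ₘ f, Polynomial.natDegree_modByMonic_lt Q hm
    (fun h => hd (by rw [h]; exact Polynomial.natDegree_one)), ?_⟩
  conv_rhs => rw [← Polynomial.modByMonic_add_div Q f]
  rw [map_add, map_mul, AdjoinRoot.mk_self, zero_mul, add_zero]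

lemma adjoinRoot_surj_of_degree_one [Nontrivial A] (hm : f.Monic) (hdeg : f.natDegree = 1)
    (y : AdjoinRoot f) : ∃ a, algebraMap A (AdjoinRoot f) a = y := by
  obtain ⟨P, hP, rfl⟩ := exists_rep f hm (by omega) y
  refine ⟨P.coeff 0, ?_⟩
  conv_rhs => rw [Polynomial.eq_C_of_natDegree_le_zero (by omega : P.natDegree ≤ 0)]
  rw [AdjoinRoot.mk_C, AdjoinRoot.algebraMap_eq]

end AdjoinRootAux

lemma permHom_univRoot {n : ℕ} (σ : Equiv.Perm (Fin n)) (i : Fin n) :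
    permHom A f n σ (univRoot A f n i) = univRoot A f n (σ.symm i) := by
  show Ideal.Quotient.liftₐ _ _ _ (Ideal.Quotient.mk _ (MvPolynomial.X i)) = _
  show Ideal.Quotient.mk (splittingIdeal A f n)
      ((rename (σ.symm : Fin n → Fin n)) (MvPolynomial.X i)) = _
  rw [rename_X]
  rfl

section Tower

variable {m : ℕ}

noncomputable def psiRoots : Fin (m+1) → SplittingAlgebra (AdjoinRoot f) (nextPoly f) m :=
  Fin.cases (algebraMap (AdjoinRoot f) _ (AdjoinRoot.root f))
    (fun i => univRoot (AdjoinRoot f) (nextPoly f) m i)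

@[simp] lemma psiRoots_zero :
    psiRoots f (0 : Fin (m+1))
      = algebraMap (AdjoinRoot f) (SplittingAlgebra (AdjoinRoot f) (nextPoly f) m)
          (AdjoinRoot.root f) := rfl

@[simp] lemma psiRoots_succ (i : Fin m) :
    psiRoots f i.succ = univRoot (AdjoinRoot f) (nextPoly f) m i := by
  unfold psiRoots
  rw [Fin.cases_succ]

lemma algebraMap_tower_D :
    (algebraMap (AdjoinRoot f) (SplittingAlgebra (AdjoinRoot f) (nextPoly f) m)).comp
        (algebraMap A (AdjoinRoot f))
      = algebraMap A (SplittingAlgebra (AdjoinRoot f) (nextPoly f) m) := rfl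

lemma psi_prod [Nontrivial A] (hm : f.Monic) (hdeg : f.natDegree = m + 1) :
    ∏ i, (Polynomial.X - Polynomial.C (psiRoots f i))
      = f.map (algebraMap A (SplittingAlgebra (AdjoinRoot f) (nextPoly f) m)) := by
  haveI : Nontrivial (AdjoinRoot f) := nontrivial_adjoinRoot f hm (by omega)
  rw [Fin.prod_univ_succ]
  simp only [psiRoots_zero, psiRoots_succ]
  rw [prod_univRoot (nextPoly f) m (nextPoly_monic f hm) (nextPoly_natDegree f hm hdeg)]
  have h1 : (Polynomial.X - Polynomial.C (algebraMap (AdjoinRoot f)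
        (SplittingAlgebra (AdjoinRoot f) (nextPoly f) m) (AdjoinRoot.root f)))
          * (nextPoly f).map (algebraMap (AdjoinRoot f) (SplittingAlgebra (AdjoinRoot f) (nextPoly f) m))
      = ((Polynomial.X - Polynomial.C (AdjoinRoot.root f)) * nextPoly f).map
          (algebraMap (AdjoinRoot f) (SplittingAlgebra (AdjoinRoot f) (nextPoly f) m)) := by
    rw [Polynomial.map_mul, Polynomial.map_sub, Polynomial.map_X, Polynomial.map_C]
  rw [h1, nextPoly_spec, Polynomial.map_map, algebraMap_tower_D]

noncomputable def PsiHom [Nontrivial A] (hm : f.Monic) (hdeg : f.natDegree = m + 1) :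
    SplittingAlgebra A f (m+1) →ₐ[A] SplittingAlgebra (AdjoinRoot f) (nextPoly f) m :=
  liftSplitting f (m+1) (psiRoots f) (psi_prod f hm hdeg)

@[simp] lemma PsiHom_univRoot [Nontrivial A] (hm : f.Monic) (hdeg : f.natDegree = m + 1)
    (i : Fin (m+1)) :
    PsiHom f hm hdeg (univRoot A f (m+1) i) = psiRoots f i :=
  liftSplitting_univRoot f (m+1) (psiRoots f) (psi_prod f hm hdeg) i

lemma aeval_univRoot_f {n : ℕ} (hm : f.Monic) (hdeg : f.natDegree = n) (i : Fin n) :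
    Polynomial.aeval (univRoot A f n i) f = 0 := by
  rw [Polynomial.aeval_def, ← Polynomial.eval_map, ← prod_univRoot f n hm hdeg,
    Polynomial.eval_prod]
  refine Finset.prod_eq_zero (Finset.mem_univ i) ?_
  simp

noncomputable def iotaHom (hm : f.Monic) (hdeg : f.natDegree = m + 1) :
    AdjoinRoot f →ₐ[A] SplittingAlgebra A f (m+1) :=
  AdjoinRoot.liftAlgHom f (Algebra.ofId A _) (univRoot A f (m+1) 0)
    (by simpa [Polynomial.aeval_def] using aeval_univRoot_f f hm hdeg 0)

@[simp] lemma iotaHom_root (hm : f.Monic) (hdeg : f.natDegree = m + 1) :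
    iotaHom f hm hdeg (AdjoinRoot.root f) = univRoot A f (m+1) 0 := by
  unfold iotaHom
  rw [AdjoinRoot.liftAlgHom_root]

lemma psi_iota [Nontrivial A] (hm : f.Monic) (hdeg : f.natDegree = m + 1) (y : AdjoinRoot f) :
    PsiHom f hm hdeg (iotaHom f hm hdeg y)
      = algebraMap (AdjoinRoot f) (SplittingAlgebra (AdjoinRoot f) (nextPoly f) m) y := by
  letI : IsScalarTower A (AdjoinRoot f) (SplittingAlgebra (AdjoinRoot f) (nextPoly f) m) :=
    IsScalarTower.of_algebraMap_eq' (algebraMap_tower_D f).symm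
  have h : (PsiHom f hm hdeg).comp (iotaHom f hm hdeg)
      = IsScalarTower.toAlgHom A (AdjoinRoot f)
          (SplittingAlgebra (AdjoinRoot f) (nextPoly f) m) :=
    AdjoinRoot.algHom_ext (by simp)
  have := DFunLike.congr_fun h y
  simpa using this

lemma PsiHom_injective [Nontrivial A] (hm : f.Monic) (hdeg : f.natDegree = m + 1) :
    Function.Injective (PsiHom f hm hdeg) := by
  haveI : Nontrivial (AdjoinRoot f) := nontrivial_adjoinRoot f hm (by omega)
  letI : Algebra (AdjoinRoot f) (SplittingAlgebra A f (m+1)) :=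
    (iotaHom f hm hdeg).toRingHom.toAlgebra
  have halg : algebraMap (AdjoinRoot f) (SplittingAlgebra A f (m+1))
      = (iotaHom f hm hdeg).toRingHom := rfl
  have hcomp : (iotaHom f hm hdeg).toRingHom.comp (algebraMap A (AdjoinRoot f))
      = algebraMap A (SplittingAlgebra A f (m+1)) :=
    RingHom.ext fun a => (iotaHom f hm hdeg).commutes a
  have hprod : ∏ i : Fin m, (Polynomial.X - Polynomial.C (univRoot A f (m+1) i.succ))
      = (nextPoly f).map (algebraMap (AdjoinRoot f) (SplittingAlgebra A f (m+1))) := by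
    apply (Polynomial.monic_X_sub_C (univRoot A f (m+1) 0)).isRegular.left
    show (Polynomial.X - Polynomial.C (univRoot A f (m+1) 0))
        * ∏ i : Fin m, (Polynomial.X - Polynomial.C (univRoot A f (m+1) i.succ))
      = (Polynomial.X - Polynomial.C (univRoot A f (m+1) 0))
        * (nextPoly f).map (algebraMap (AdjoinRoot f) (SplittingAlgebra A f (m+1)))
    rw [← Fin.prod_univ_succ (fun i => Polynomial.X - Polynomial.C (univRoot A f (m+1) i)),
      prod_univRoot f (m+1) hm hdeg, halg]
    have h1 : (Polynomial.X - Polynomial.C (univRoot A f (m+1) 0))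
          * (nextPoly f).map (iotaHom f hm hdeg).toRingHom
        = ((Polynomial.X - Polynomial.C (AdjoinRoot.root f)) * nextPoly f).map
            (iotaHom f hm hdeg).toRingHom := by
      rw [Polynomial.map_mul, Polynomial.map_sub, Polynomial.map_X, Polynomial.map_C]
      norm_num
    rw [h1, nextPoly_spec, Polynomial.map_map, hcomp]
  letI : IsScalarTower A (AdjoinRoot f) (SplittingAlgebra (AdjoinRoot f) (nextPoly f) m) :=
    IsScalarTower.of_algebraMap_eq' (algebraMap_tower_D f).symm
  letI : IsScalarTower A (AdjoinRoot f) (SplittingAlgebra A f (m+1)) :=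
    IsScalarTower.of_algebraMap_eq' (by rw [halg]; exact hcomp.symm)
  set Φ := liftSplitting (A := AdjoinRoot f) (nextPoly f) m
    (fun i => univRoot A f (m+1) i.succ) hprod with hΦ
  have hlinv : (Φ.restrictScalars A).comp (PsiHom f hm hdeg)
      = AlgHom.id A (SplittingAlgebra A f (m+1)) := by
    apply algHom_ext'
    intro i
    induction i using Fin.cases with
    | zero =>
      rw [AlgHom.comp_apply, PsiHom_univRoot, psiRoots_zero]
      show Φ (algebraMap (AdjoinRoot f) (SplittingAlgebra (AdjoinRoot f) (nextPoly f) m)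
        (AdjoinRoot.root f)) = _
      rw [AlgHom.commutes Φ (AdjoinRoot.root f), halg]
      simp
    | succ i =>
      rw [AlgHom.comp_apply, PsiHom_univRoot, psiRoots_succ]
      show Φ (univRoot (AdjoinRoot f) (nextPoly f) m i) = _
      rw [hΦ, liftSplitting_univRoot]
      simp
  intro a b hab
  have h1 := DFunLike.congr_fun hlinv a
  have h2 := DFunLike.congr_fun hlinv b
  simp only [AlgHom.comp_apply, AlgHom.id_apply, AlgHom.coe_restrictScalars] at h1 h2
  rw [← h1, ← h2, hab]

def extPerm {k : ℕ} (σ : Equiv.Perm (Fin k)) : Equiv.Perm (Fin (k+1)) :=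
  Equiv.Perm.decomposeFin.symm (0, σ)

@[simp] lemma extPerm_zero {k : ℕ} (σ : Equiv.Perm (Fin k)) : extPerm σ 0 = 0 :=
  Equiv.Perm.decomposeFin_symm_apply_zero 0 σ

@[simp] lemma extPerm_succ {k : ℕ} (σ : Equiv.Perm (Fin k)) (i : Fin k) :
    extPerm σ i.succ = (σ i).succ := by
  unfold extPerm
  rw [Equiv.Perm.decomposeFin_symm_apply_succ]
  rw [Equiv.swap_self]
  rfl

@[simp] lemma extPerm_symm_zero {k : ℕ} (σ : Equiv.Perm (Fin k)) : (extPerm σ).symm 0 = 0 := by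
  conv_lhs => rw [← extPerm_zero σ]
  exact Equiv.symm_apply_apply _ _

@[simp] lemma extPerm_symm_succ {k : ℕ} (σ : Equiv.Perm (Fin k)) (i : Fin k) :
    (extPerm σ).symm i.succ = (σ.symm i).succ := by
  apply (extPerm σ).injective
  rw [Equiv.apply_symm_apply, extPerm_succ, Equiv.apply_symm_apply]

lemma psi_equivariant [Nontrivial A] (hm : f.Monic) (hdeg : f.natDegree = m + 1)
    (σ : Equiv.Perm (Fin m)) (x : SplittingAlgebra A f (m+1)) :
    PsiHom f hm hdeg (permHom A f (m+1) (extPerm σ) x)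
      = permHom (AdjoinRoot f) (nextPoly f) m σ (PsiHom f hm hdeg x) := by
  letI : IsScalarTower A (AdjoinRoot f) (SplittingAlgebra (AdjoinRoot f) (nextPoly f) m) :=
    IsScalarTower.of_algebraMap_eq' (algebraMap_tower_D f).symm
  have h : (PsiHom f hm hdeg).comp (permHom A f (m+1) (extPerm σ))
      = ((permHom (AdjoinRoot f) (nextPoly f) m σ).restrictScalars A).comp
          (PsiHom f hm hdeg) := by
    apply algHom_ext'
    intro i
    induction i using Fin.cases with
    | zero =>
      rw [AlgHom.comp_apply, AlgHom.comp_apply, permHom_univRoot, extPerm_symm_zero,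
        PsiHom_univRoot, psiRoots_zero]
      show _ = permHom (AdjoinRoot f) (nextPoly f) m σ
        (algebraMap (AdjoinRoot f) (SplittingAlgebra (AdjoinRoot f) (nextPoly f) m)
          (AdjoinRoot.root f))
      rw [AlgHom.commutes]
    | succ i =>
      rw [AlgHom.comp_apply, AlgHom.comp_apply, permHom_univRoot, extPerm_symm_succ,
        PsiHom_univRoot, PsiHom_univRoot, psiRoots_succ, psiRoots_succ]
      show _ = permHom (AdjoinRoot f) (nextPoly f) m σ (univRoot (AdjoinRoot f) (nextPoly f) m i)
      rw [permHom_univRoot]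
  exact DFunLike.congr_fun h x

end Tower

section Induction

universe u

lemma inj_univ (n : ℕ) :
    ∀ (A : Type u) [CommRing A] (f : Polynomial A), f.Monic → f.natDegree = n →
      Function.Injective (algebraMap A (SplittingAlgebra A f n)) := by
  induction n with
  | zero => intro A _ f _ _; exact inj0 f
  | succ m IH =>
    intro A _ f hm hdeg
    rcases subsingleton_or_nontrivial A with hs | hn
    · exact fun a b _ => Subsingleton.elim a b
    haveI := nontrivial_adjoinRoot f hm (by omega)
    intro a b hab
    have h1 := congrArg (PsiHom f hm hdeg) hab
    rw [AlgHom.commutes, AlgHom.commutes, ← algebraMap_tower_D f, RingHom.comp_apply,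
      RingHom.comp_apply] at h1
    exact algebraMap_adjoinRoot_injective f hm (by omega)
      (IH (AdjoinRoot f) (nextPoly f) (nextPoly_monic f hm) (nextPoly_natDegree f hm hdeg) h1)

lemma adjoinRoot_li {A : Type*} [CommRing A] {f : Polynomial A} (hm : f.Monic) {n : ℕ}
    (hdeg : f.natDegree = n) (c : Fin n → A)
    (h : ∑ j, algebraMap A (AdjoinRoot f) (c j) * AdjoinRoot.root f ^ (j : ℕ) = 0) :
    ∀ j, c j = 0 := by
  subst hdeg
  have hli := (AdjoinRoot.powerBasis' hm).basis.linearIndependent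
  rw [Fintype.linearIndependent_iff] at hli
  refine hli c ?_
  rw [← h]
  apply Finset.sum_congr rfl
  intro j _
  rw [(AdjoinRoot.powerBasis' hm).basis_eq_pow j, Algebra.smul_def]
  simp

lemma li_univ {A : Type u} [CommRing A] (f : Polynomial A) {m : ℕ} (hm : f.Monic)
    (hdeg : f.natDegree = m + 1) (c : Fin (m+1) → A)
    (h : ∑ j, algebraMap A (SplittingAlgebra A f (m+1)) (c j)
        * univRoot A f (m+1) 0 ^ (j : ℕ) = 0) :
    ∀ j, c j = 0 := by
  rcases subsingleton_or_nontrivial A with hs | hn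
  · intro j; exact Subsingleton.elim _ _
  haveI := nontrivial_adjoinRoot f hm (by omega)
  apply adjoinRoot_li hm hdeg c
  have h2 := congrArg (PsiHom f hm hdeg) h
  rw [map_zero, map_sum] at h2
  have h3 : ∀ j : Fin (m+1), PsiHom f hm hdeg
      (algebraMap A (SplittingAlgebra A f (m+1)) (c j) * univRoot A f (m+1) 0 ^ (j:ℕ))
      = algebraMap (AdjoinRoot f) (SplittingAlgebra (AdjoinRoot f) (nextPoly f) m)
          (algebraMap A (AdjoinRoot f) (c j) * AdjoinRoot.root f ^ (j:ℕ)) := by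
    intro j
    rw [map_mul, map_pow, AlgHom.commutes, PsiHom_univRoot, psiRoots_zero, map_mul, map_pow,
      ← algebraMap_tower_D f, RingHom.comp_apply]
  rw [Finset.sum_congr rfl (fun j _ => h3 j), ← map_sum] at h2
  exact inj_univ m (AdjoinRoot f) (nextPoly f) (nextPoly_monic f hm)
    (nextPoly_natDegree f hm hdeg) (h2.trans (map_zero _).symm)

lemma nextPoly_coeff {A : Type*} [CommRing A] (f : Polynomial A) [Nontrivial A] (hm : f.Monic)
    {k : ℕ} (hdeg : f.natDegree = k + 2) :
    (nextPoly f).coeff k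
      = algebraMap A (AdjoinRoot f) (f.coeff (k+1)) + AdjoinRoot.root f := by
  haveI : Nontrivial (AdjoinRoot f) := nontrivial_adjoinRoot f hm (by omega)
  have h := congrArg (fun p => Polynomial.coeff p (k+1)) (nextPoly_spec f)
  simp only [sub_mul, Polynomial.coeff_sub, Polynomial.coeff_X_mul, Polynomial.coeff_C_mul,
    Polynomial.coeff_map] at h
  have htop : (nextPoly f).coeff (k+1) = 1 := by
    have h1 : (nextPoly f).natDegree = k + 1 := nextPoly_natDegree f hm hdeg
    have := (nextPoly_monic f hm).coeff_natDegree
    rwa [h1] at this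
  rw [htop, mul_one] at h
  -- h : g.coeff k - root = algebraMap (f.coeff (k+1))
  exact sub_eq_iff_eq_add.mp h

lemma aeval_f_univRoot0 {A : Type u} [CommRing A] (f : Polynomial A) [Nontrivial A] {k : ℕ}
    (hm : f.Monic) (hdeg : f.natDegree = k + 2) :
    Polynomial.aeval (univRoot (AdjoinRoot f) (nextPoly f) (k+1) 0) f = 0 := by
  haveI : Nontrivial (AdjoinRoot f) := nontrivial_adjoinRoot f hm (by omega)
  rw [Polynomial.aeval_def, ← Polynomial.eval_map]
  have h1 : f.map (algebraMap A (SplittingAlgebra (AdjoinRoot f) (nextPoly f) (k+1)))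
      = ((f.map (algebraMap A (AdjoinRoot f))).map
          (algebraMap (AdjoinRoot f) (SplittingAlgebra (AdjoinRoot f) (nextPoly f) (k+1)))) := by
    rw [Polynomial.map_map, algebraMap_tower_D]
  rw [h1, ← nextPoly_spec f, Polynomial.map_mul, Polynomial.eval_mul]
  have hg : ((nextPoly f).map (algebraMap (AdjoinRoot f)
        (SplittingAlgebra (AdjoinRoot f) (nextPoly f) (k+1)))).eval
      (univRoot (AdjoinRoot f) (nextPoly f) (k+1) 0) = 0 := by
    rw [Polynomial.eval_map, ← Polynomial.aeval_def]
    exact aeval_univRoot_f (nextPoly f) (nextPoly_monic f hm) (nextPoly_natDegree f hm hdeg) 0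
  rw [hg, mul_zero]

lemma main_aux (n : ℕ) :
    ∀ (A : Type u) [CommRing A] (f : Polynomial A), f.Monic → f.natDegree = n →
      (2:A) ∈ nonZeroDivisors A →
      ∀ x : SplittingAlgebra A f n, (∀ σ : Equiv.Perm (Fin n), permHom A f n σ x = x) →
        x ∈ (algebraMap A (SplittingAlgebra A f n)).range := by
  induction n with
  | zero => intro A _ f _ _ _ x _; exact level0_mem f x
  | succ m IH =>
    intro A _ f hm hdeg h2reg x hinv
    rcases subsingleton_or_nontrivial A with hs | hn
    · haveI : Subsingleton (MvPolynomial (Fin (m+1)) A) :=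
        ⟨fun p q => MvPolynomial.ext _ _ fun d => Subsingleton.elim _ _⟩
      obtain ⟨p, rfl⟩ := Ideal.Quotient.mk_surjective x
      exact ⟨0, by show Ideal.Quotient.mk (splittingIdeal A f (m+1)) (MvPolynomial.C 0) = _; exact congrArg _ (Subsingleton.elim _ _)⟩
    haveI := nontrivial_adjoinRoot f hm (by omega)
    have hinv' : ∀ σ : Equiv.Perm (Fin m),
        permHom (AdjoinRoot f) (nextPoly f) m σ (PsiHom f hm hdeg x) = PsiHom f hm hdeg x :=
      fun σ => by rw [← psi_equivariant f hm hdeg σ x, hinv (extPerm σ)]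
    have hyex : PsiHom f hm hdeg x ∈ (algebraMap (AdjoinRoot f)
        (SplittingAlgebra (AdjoinRoot f) (nextPoly f) m)).range := by
      rcases Nat.eq_zero_or_pos m with hm0 | hm0
      · subst hm0; exact level0_mem (nextPoly f) _
      · exact IH (AdjoinRoot f) (nextPoly f) (nextPoly_monic f hm)
          (nextPoly_natDegree f hm hdeg) (two_regular_adjoinRoot f hm h2reg) _ hinv'
    obtain ⟨y, hy⟩ := hyex
    have hx : x = iotaHom f hm hdeg y := by
      apply PsiHom_injective f hm hdeg
      rw [psi_iota]
      exact hy.symm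
    rcases Nat.eq_zero_or_pos m with hm0 | hm1
    · subst hm0
      obtain ⟨a, ha⟩ := adjoinRoot_surj_of_degree_one f hm (by omega) y
      refine ⟨a, ?_⟩
      rw [hx, ← ha]
      exact ((iotaHom f hm hdeg).commutes a).symm
    obtain ⟨k, rfl⟩ : ∃ k, m = k + 1 := ⟨m - 1, by omega⟩
    obtain ⟨P, hPdeg, hPmk⟩ := exists_rep f hm (by omega) y
    set t := univRoot (AdjoinRoot f) (nextPoly f) (k+1) 0 with ht
    have hx1 : PsiHom f hm hdeg x
        = Polynomial.eval₂ (algebraMap A (SplittingAlgebra (AdjoinRoot f) (nextPoly f) (k+1)))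
            (algebraMap (AdjoinRoot f) _ (AdjoinRoot.root f)) P := by
      rw [← hy, ← hPmk, ← AdjoinRoot.aeval_eq, Polynomial.aeval_def]
      exact Polynomial.hom_eval₂ ..
    have hswap : permHom A f (k+2) (Equiv.swap 0 1) x = x := hinv _
    have hcomp : (PsiHom f hm hdeg).comp ((permHom A f (k+2) (Equiv.swap 0 1)).comp
        (iotaHom f hm hdeg)) = AdjoinRoot.liftAlgHom f (Algebra.ofId A _) t
          (by simpa [Polynomial.aeval_def] using aeval_f_univRoot0 f hm hdeg) := by
      apply AdjoinRoot.algHom_ext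
      rw [AlgHom.comp_apply, AlgHom.comp_apply, iotaHom_root, permHom_univRoot,
        AdjoinRoot.liftAlgHom_root]
      rw [Equiv.symm_swap, Equiv.swap_apply_left, PsiHom_univRoot]
      have h01 : (1 : Fin (k+2)) = (0 : Fin (k+1)).succ := rfl
      rw [h01, psiRoots_succ]
    have hx2 : PsiHom f hm hdeg x
        = Polynomial.eval₂ (algebraMap A (SplittingAlgebra (AdjoinRoot f) (nextPoly f) (k+1)))
            t P := by
      conv_lhs => rw [← hswap, hx]
      have h5 := DFunLike.congr_fun hcomp y
      simp only [AlgHom.comp_apply] at h5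
      rw [h5, ← hPmk, AdjoinRoot.liftAlgHom_mk, Algebra.toRingHom_ofId]
    have hdegP : P.natDegree < k + 2 := by rw [hdeg] at hPdeg; exact hPdeg
    have hev : ∀ z : SplittingAlgebra (AdjoinRoot f) (nextPoly f) (k+1),
        Polynomial.eval₂ (algebraMap A _) z P
          = ∑ i ∈ Finset.range (k+2), algebraMap A _ (P.coeff i) * z ^ i :=
      fun z => Polynomial.eval₂_eq_sum_range' (algebraMap A _) hdegP z
    have hrel : t ^ (k+1) = -∑ j ∈ Finset.range (k+1),
        algebraMap (AdjoinRoot f) _ ((nextPoly f).coeff j) * t ^ j := by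
      have h0 : Polynomial.eval₂ (algebraMap (AdjoinRoot f)
          (SplittingAlgebra (AdjoinRoot f) (nextPoly f) (k+1))) t (nextPoly f) = 0 := by
        rw [← Polynomial.aeval_def]
        exact aeval_univRoot_f (nextPoly f) (nextPoly_monic f hm)
          (nextPoly_natDegree f hm hdeg) 0
      rw [Polynomial.eval₂_eq_sum_range' (algebraMap (AdjoinRoot f) _)
        (show (nextPoly f).natDegree < k + 2 by rw [nextPoly_natDegree f hm hdeg]; omega) t,
        Finset.sum_range_succ] at h0
      have htop : (nextPoly f).coeff (k+1) = 1 := by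
        have h1 := (nextPoly_monic f hm).coeff_natDegree
        rwa [nextPoly_natDegree f hm hdeg] at h1
      rw [htop, map_one, one_mul] at h0
      exact eq_neg_of_add_eq_zero_right h0
    have e2 : ∑ i ∈ Finset.range (k+2),
        algebraMap A (SplittingAlgebra (AdjoinRoot f) (nextPoly f) (k+1)) (P.coeff i) * t ^ i
        = algebraMap (AdjoinRoot f) _ y := by
      rw [← hev t, ← hx2]; exact hy.symm
    set cnat : ℕ → AdjoinRoot f := fun j =>
      algebraMap A (AdjoinRoot f) (P.coeff j)
        - algebraMap A (AdjoinRoot f) (P.coeff (k+1)) * (nextPoly f).coeff j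
        - (if j = 0 then y else 0) with hcnat
    have e3 : ∑ j ∈ Finset.range (k+1),
        algebraMap (AdjoinRoot f) (SplittingAlgebra (AdjoinRoot f) (nextPoly f) (k+1)) (cnat j)
          * t ^ j = 0 := by
      have expand := e2
      rw [Finset.sum_range_succ, hrel, mul_neg] at expand
      erw [Finset.mul_sum] at expand
      have hone : algebraMap (AdjoinRoot f) (SplittingAlgebra (AdjoinRoot f) (nextPoly f) (k+1)) y
          = ∑ j ∈ Finset.range (k+1),
              (if j = 0 then algebraMap (AdjoinRoot f)
                (SplittingAlgebra (AdjoinRoot f) (nextPoly f) (k+1)) y else 0) * t ^ j := by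
        rw [Finset.sum_eq_single 0]
        · rw [if_pos rfl, pow_zero, mul_one]
        · intro b _ hb; rw [if_neg hb, zero_mul]
        · intro h; exact absurd (Finset.mem_range.mpr (by omega)) h
      have hterm : ∀ j ∈ Finset.range (k+1),
          algebraMap (AdjoinRoot f) (SplittingAlgebra (AdjoinRoot f) (nextPoly f) (k+1)) (cnat j)
              * t ^ j
            = algebraMap A (SplittingAlgebra (AdjoinRoot f) (nextPoly f) (k+1)) (P.coeff j) * t ^ j
              - algebraMap A (SplittingAlgebra (AdjoinRoot f) (nextPoly f) (k+1)) (P.coeff (k+1))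
                * (algebraMap (AdjoinRoot f) (SplittingAlgebra (AdjoinRoot f) (nextPoly f) (k+1))
                    ((nextPoly f).coeff j) * t ^ j)
              - (if j = 0 then algebraMap (AdjoinRoot f)
                  (SplittingAlgebra (AdjoinRoot f) (nextPoly f) (k+1)) y else 0) * t ^ j := by
        intro j _
        rw [hcnat]
        simp only []
        rw [map_sub, map_sub, map_mul,
          apply_ite (algebraMap (AdjoinRoot f) (SplittingAlgebra (AdjoinRoot f) (nextPoly f)
            (k+1))), map_zero]
        rw [← RingHom.comp_apply (algebraMap (AdjoinRoot f) _) (algebraMap A (AdjoinRoot f))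
            (P.coeff j),
          ← RingHom.comp_apply (algebraMap (AdjoinRoot f) _) (algebraMap A (AdjoinRoot f))
            (P.coeff (k+1)),
          algebraMap_tower_D f]
        ring
      rw [Finset.sum_congr rfl hterm]
      erw [Finset.sum_sub_distrib, Finset.sum_sub_distrib, ← hone]
      linear_combination (norm := ring1!) expand
    have hc : ∀ j : Fin (k+1), cnat (j : ℕ) = 0 := by
      have h7 := li_univ (A := AdjoinRoot f) (nextPoly f) (nextPoly_monic f hm)
        (nextPoly_natDegree f hm hdeg) (fun j : Fin (k+1) => cnat (j : ℕ)) ?_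
      · exact h7
      · rw [Fin.sum_univ_eq_sum_range (fun j => algebraMap (AdjoinRoot f)
          (SplittingAlgebra (AdjoinRoot f) (nextPoly f) (k+1)) (cnat j) * t ^ j) (k+1)]
        exact e3
    have hatop : P.coeff (k+1) = 0 := by
      rcases Nat.eq_zero_or_pos k with rfl | hk1
      · have h8 := hc ⟨0, by omega⟩
        simp only [hcnat, Fin.val_mk, if_pos rfl, if_true] at h8
        rw [nextPoly_coeff f hm hdeg] at h8
        have hyexp : y = algebraMap A (AdjoinRoot f) (P.coeff 0)
            + algebraMap A (AdjoinRoot f) (P.coeff 1) * AdjoinRoot.root f := by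
          rw [← hPmk, ← AdjoinRoot.aeval_eq, Polynomial.aeval_def,
            Polynomial.eval₂_eq_sum_range' (algebraMap A (AdjoinRoot f))
              (show P.natDegree < 2 from hdegP) (AdjoinRoot.root f)]
          simp [Finset.sum_range_succ]
        rw [hyexp] at h8
        have h9 : algebraMap A (AdjoinRoot f) (-(P.coeff 1 * f.coeff 1))
            + (-(2 * P.coeff 1)) • AdjoinRoot.root f = 0 := by
          rw [map_neg, map_mul, Algebra.smul_def, map_neg, map_mul, map_ofNat]
          linear_combination h8
        have h10 := coord_lemma f hm (by omega) h9
        have h11 : P.coeff 1 * 2 = 0 := by linear_combination -h10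
        exact mem_nonZeroDivisors_iff_right.mp h2reg (P.coeff 1) h11
      · have h8 := hc ⟨k, by omega⟩
        simp only [hcnat, Fin.val_mk] at h8
        rw [if_neg (by omega : ¬ k = 0)] at h8
        rw [nextPoly_coeff f hm hdeg] at h8
        have h9 : algebraMap A (AdjoinRoot f) (P.coeff k - P.coeff (k+1) * f.coeff (k+1))
            + (-(P.coeff (k+1))) • AdjoinRoot.root f = 0 := by
          rw [map_sub, map_mul, Algebra.smul_def, map_neg]
          linear_combination h8
        have h10 := coord_lemma f hm (by omega) h9
        exact neg_eq_zero.mp h10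
    have hy0 : y = algebraMap A (AdjoinRoot f) (P.coeff 0) := by
      have h6 := hc ⟨0, by omega⟩
      simp only [hcnat, Fin.val_mk, if_pos rfl, hatop, map_zero, zero_mul, sub_zero] at h6
      -- h6 : algebraMap (P.coeff 0) - y = 0
      exact (sub_eq_zero.mp h6).symm
    exact ⟨P.coeff 0, by
      rw [hx, hy0]
      exact ((iotaHom f hm hdeg).commutes (P.coeff 0)).symm⟩

end Induction

end SplitAux

/-- If `2` is regular (neither zero nor a zero divisor) in `A`, then `A` is the ring of
invariants of the splitting algebra `A_f` under the action of the symmetric group `Sₙ`. -/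
theorem invariants_eq_base_of_two_regular {A : Type*} [CommRing A]
    (f : Polynomial A) (n : ℕ) (hmonic : f.Monic) (hdeg : f.natDegree = n)
    (h2ne : (2 : A) ≠ 0) (h2reg : (2 : A) ∈ nonZeroDivisors A) :
    ∀ x : SplittingAlgebra A f n,
      (∀ σ : Equiv.Perm (Fin n), permHom A f n σ x = x) ↔
        x ∈ (algebraMap A (SplittingAlgebra A f n)).range := by
  intro x
  constructor
  · exact SplitAux.main_aux n A f hmonic hdeg h2reg x
  · rintro ⟨a, rfl⟩ σ
    exact (permHom A f n σ).commutes a
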